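/- Energy of the shrunk predicted instance for common deadlines (Corollary 'CD_shrunkPredictionError'): Let 0 ≤ η ≤ λ < 1. Consider n jobs with workloads w_i ≥ 0 sharing a common deadline d, with actual release times r_i < d and predicted release times p_i < d satisfying |p_i − r_i| ≤ η·(d − p_i). Let p'_i = ⌊p_i + λ·(d − p_i)⌋, let J_{P'} be the instance in which job i has interval [p'_i, d) and workload w_i, and J_R the instance in which job i has interval [r_i, d) and workload w_i. Then OPT(J_{P'}) ≤ ((1 + η)/(1 − λ))^(α−1) · OPT(J_R). -/
import Mathlib


open MeasureTheory
open scoped ENNReal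

/-- The discrete σ-algebra on `Option ι` (the job assignment takes values in a
countable/finite set of jobs plus "idle"). -/
instance optionMeasurableSpace {ι : Type*} : MeasurableSpace (Option ι) := ⊤

/-- A speed-scaling instance: each job `i` has release time `r i`, deadline `d i`
and workload `w i`. -/
structure SSInstance (ι : Type*) where
  r : ι → ℝ
  d : ι → ℝ
  w : ι → ℝ

/-- A schedule `(s, σ)` (measurable speed function together with a measurable job
assignment) is feasible for the instance `J`: each job is only executed inside its
interval `[r i, d i)` and its whole workload is processed. -/
def SSFeasible {ι : Type*} (J : SSInstance ι) (s : ℝ → ℝ) (σ : ℝ → Option ι) : Prop :=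
  Measurable s ∧ Measurable σ ∧ (∀ t, 0 ≤ s t) ∧
    ∀ i : ι, {t | σ t = some i} ⊆ Set.Ico (J.r i) (J.d i) ∧
      J.w i ≤ ∫ t in {t | σ t = some i}, s t

/-- Energy consumption `∫ s(t)^α dt` of a speed function. -/
noncomputable def SSEnergy (α : ℝ) (s : ℝ → ℝ) : ℝ≥0∞ :=
  ∫⁻ t, ENNReal.ofReal (s t ^ α)

/-- `OPT(J)`: the infimum of the energies of feasible schedules for instance `J`. -/
noncomputable def SSOpt (α : ℝ) {ι : Type*} (J : SSInstance ι) : ℝ≥0∞ :=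
  sInf {E | ∃ s σ, SSFeasible J s σ ∧ E = SSEnergy α s}

lemma map_affine_volume {c b : ℝ} (hc : c ≠ 0) :
    Measure.map (fun t : ℝ => c * t + b) volume = ENNReal.ofReal |c⁻¹| • volume := by
  have h : (fun t : ℝ => c * t + b) = (fun x => x + b) ∘ (fun t => c * t) := rfl
  rw [h, ← Measure.map_map (measurable_add_const b) (measurable_const_mul c),
    Real.map_volume_mul_left hc]
  simp [Measure.map_smul, map_add_right_eq_self]

/-- Rescaling lemma: shrinking each interval `[ρ i, d)` towards `d` by factor `c`
multiplies the optimal energy by at most `c ^ (1 - α)`. -/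
lemma ss_rescale {ι : Type*} (α : ℝ) (ρ ρ' wl : ι → ℝ) (d c : ℝ) (hc : 0 < c)
    (hρ' : ∀ i, ρ' i ≤ d - c * (d - ρ i)) :
    SSOpt α (⟨ρ', fun _ => d, wl⟩ : SSInstance ι)
      ≤ ENNReal.ofReal (c ^ (1 - α)) * SSOpt α (⟨ρ, fun _ => d, wl⟩ : SSInstance ι) := by
  set K := ENNReal.ofReal (c ^ (1 - α)) with hKdef
  have hK0 : K ≠ 0 := by
    simp only [hKdef, ne_eq, ENNReal.ofReal_eq_zero, not_le]
    exact Real.rpow_pos_of_pos hc _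
  have hKtop : K ≠ ∞ := ENNReal.ofReal_ne_top
  rw [SSOpt, SSOpt, ← ENNReal.div_le_iff' hK0 hKtop]
  apply le_sInf
  rintro E ⟨s, σ, ⟨hs, hσ, hs0, hjobs⟩, rfl⟩
  rw [ENNReal.div_le_iff' hK0 hKtop]
  set φ : ℝ → ℝ := fun t => (t - d) / c + d with hφdef
  have hφeq : φ = fun t : ℝ => c⁻¹ * t + (d - c⁻¹ * d) := by
    funext t; simp only [hφdef]; field_simp; ring
  have hφm : Measurable φ := by
    rw [hφeq]; exact (measurable_const_mul _).add_const _
  have hmap : Measure.map φ volume = ENNReal.ofReal c • volume := by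
    rw [hφeq, map_affine_volume (inv_ne_zero hc.ne')]
    rw [inv_inv, abs_of_pos hc]
  have hkey : ∀ x t : ℝ, x ≤ φ t ↔ (x - d) * c + d ≤ t := by
    intro x t
    constructor
    · intro h
      have h1 : x - d ≤ (t - d) / c := by simp only [hφdef] at h; linarith
      have h2 := (le_div_iff₀ hc).1 h1
      linarith
    · intro h
      have h1 : (x - d) * c ≤ t - d := by linarith
      have h2 := (le_div_iff₀ hc).2 h1
      simp only [hφdef]; linarith
  have hkey2 : ∀ t : ℝ, φ t < d ↔ t < d := by
    intro t
    simp only [hφdef]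
    constructor
    · intro h
      have h1 : (t - d) / c < 0 := by linarith
      have := (div_lt_iff₀ hc).1 h1
      linarith
    · intro h
      have h1 : t - d < 0 * c := by linarith
      have := (div_lt_iff₀ hc).2 h1
      linarith
  set s' : ℝ → ℝ := fun t => c⁻¹ * s (φ t) with hs'def
  set σ' : ℝ → Option ι := fun t => σ (φ t) with hσ'def
  have hs'm : Measurable s' := (hs.comp hφm).const_mul _
  have hσ'm : Measurable σ' := hσ.comp hφm
  have hA : ∀ i : ι, MeasurableSet {t | σ t = some i} := fun i => show MeasurableSet (σ ⁻¹' {some i}) from hσ trivial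
  have hpre : ∀ i : ι, {t | σ' t = some i} = φ ⁻¹' {t | σ t = some i} := fun i => rfl
  -- energy of the rescaled schedule
  have hmeas_f : Measurable fun t => ENNReal.ofReal (s t ^ α) :=
    ENNReal.measurable_ofReal.comp (hs.pow_const α)
  have henergy : SSEnergy α s' = K * SSEnergy α s := by
    have h1 : ∀ t, ENNReal.ofReal (s' t ^ α)
        = ENNReal.ofReal (c⁻¹ ^ α) * ENNReal.ofReal (s (φ t) ^ α) := by
      intro t
      rw [hs'def, Real.mul_rpow (inv_nonneg.2 hc.le) (hs0 _),
        ENNReal.ofReal_mul (Real.rpow_nonneg (inv_nonneg.2 hc.le) _)]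
    calc SSEnergy α s' = ∫⁻ t, ENNReal.ofReal (c⁻¹ ^ α) * ENNReal.ofReal (s (φ t) ^ α) := by
          simp only [SSEnergy, h1]
      _ = ENNReal.ofReal (c⁻¹ ^ α) * ∫⁻ t, ENNReal.ofReal (s (φ t) ^ α) :=
          lintegral_const_mul _ (hmeas_f.comp hφm)
      _ = ENNReal.ofReal (c⁻¹ ^ α) * ∫⁻ t, ENNReal.ofReal (s t ^ α) ∂(Measure.map φ volume) := by
          rw [lintegral_map hmeas_f hφm]
      _ = ENNReal.ofReal (c⁻¹ ^ α) * (ENNReal.ofReal c * SSEnergy α s) := by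
          rw [hmap, lintegral_smul_measure]; rfl
      _ = K * SSEnergy α s := by
          rw [← mul_assoc, ← ENNReal.ofReal_mul (Real.rpow_nonneg (inv_nonneg.2 hc.le) _)]
          congr 2
          rw [Real.inv_rpow hc.le, Real.rpow_sub hc, Real.rpow_one]
          exact inv_mul_eq_div _ _
  refine sInf_le ⟨s', σ', ⟨hs'm, hσ'm, fun t => mul_nonneg (inv_nonneg.2 hc.le) (hs0 _),
    fun i => ⟨?_, ?_⟩⟩, henergy.symm⟩
  · -- interval containment
    intro t ht
    have h2 := (hjobs i).1 ht
    refine ⟨?_, (hkey2 t).1 h2.2⟩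
    have h3 := (hkey (ρ i) t).1 h2.1
    have := hρ' i
    simp only []
    nlinarith [h3, hρ' i]
  · -- workload
    rw [hpre]
    set A := {t | σ t = some i} with hAdef
    have hmapA : Measure.map φ (volume.restrict (φ ⁻¹' A))
        = ENNReal.ofReal c • volume.restrict A := by
      rw [← Measure.restrict_map hφm (hA i), hmap, Measure.restrict_smul]
    have hint : ∫ t in φ ⁻¹' A, s' t = ∫ t in A, s t := by
      calc ∫ t in φ ⁻¹' A, s' t
          = ∫ u, c⁻¹ * s u ∂(Measure.map φ (volume.restrict (φ ⁻¹' A))) :=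
            (integral_map hφm.aemeasurable
              ((hs.const_mul c⁻¹).aestronglyMeasurable)).symm
        _ = c * ∫ u in A, c⁻¹ * s u := by
            rw [hmapA, integral_smul_measure, ENNReal.toReal_ofReal hc.le, smul_eq_mul]
        _ = ∫ u in A, s u := by
            rw [integral_const_mul, ← mul_assoc, mul_inv_cancel₀ hc.ne', one_mul]
    rw [hint]
    exact (hjobs i).2


/-- **Corollary `CD_shrunkPredictionError`.** For common-deadline instances with
`0 ≤ η ≤ λ < 1` and predictions within error `η`, the optimal energy of the shrunk
predicted instance `J_{P'}` (with release times `⌊p_i + λ(d-p_i)⌋`) is at most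
`((1+η)/(1-λ))^(α-1)` times that of the actual instance `J_R`. -/
theorem cd_shrunk_prediction_error (α : ℝ) (hα : 1 < α) (n : ℕ)
    (r p w : Fin n → ℝ) (d : ℝ) (η lam : ℝ)
    (hη0 : 0 ≤ η) (hηlam : η ≤ lam) (hlam : lam < 1)
    (hw : ∀ i, 0 ≤ w i) (hrd : ∀ i, r i < d) (hpd : ∀ i, p i < d)
    (hp : ∀ i, |p i - r i| ≤ η * (d - p i)) :
    SSOpt α (⟨fun i => (⌊p i + lam * (d - p i)⌋ : ℤ), fun _ => d, w⟩ : SSInstance (Fin n))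
      ≤ ENNReal.ofReal (((1 + η) / (1 - lam)) ^ (α - 1)) *
        SSOpt α (⟨r, fun _ => d, w⟩ : SSInstance (Fin n)) := by
  have h1η : (0:ℝ) < 1 + η := by linarith
  have h1l : (0:ℝ) < 1 - lam := by linarith
  set c : ℝ := (1 - lam) / (1 + η) with hcdef
  have hc : 0 < c := div_pos h1l h1η
  have hconst : ((1 + η) / (1 - lam)) ^ (α - 1) = c ^ (1 - α) := by
    rw [hcdef, ← inv_div ((1:ℝ) + η) ((1:ℝ) - lam)]
    rw [Real.inv_rpow (le_of_lt (div_pos h1η h1l)), ← Real.rpow_neg (le_of_lt (div_pos h1η h1l))]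
    ring_nf
  have hρ' : ∀ i, ((⌊p i + lam * (d - p i)⌋ : ℤ) : ℝ) ≤ d - c * (d - r i) := by
    intro i
    have h1 : ((⌊p i + lam * (d - p i)⌋ : ℤ) : ℝ) ≤ p i + lam * (d - p i) := Int.floor_le _
    have h2 : p i - r i ≤ η * (d - p i) := le_trans (le_abs_self _) (hp i)
    have h3 : d - r i ≤ (1 + η) * (d - p i) := by nlinarith
    have h4 : c * (d - r i) ≤ (1 - lam) * (d - p i) := by
      rw [hcdef, div_mul_eq_mul_div, div_le_iff₀ h1η]
      nlinarith [mul_le_mul_of_nonneg_left h3 h1l.le]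
    linarith
  have := ss_rescale α r (fun i => ((⌊p i + lam * (d - p i)⌋ : ℤ) : ℝ)) w d c hc hρ'
  rw [hconst]
  exact this
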